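/- Let n, k, t, r be positive integers with r ≤ k, and let U_1, ..., U_k be disjoint n-sets. Let F be an r-partite r-graph on r of the classes U_{i_1}, ..., U_{i_r} with |F| > (t-1)n^{r-1}, and let X be a set of s-1 vertices (s ≤ t) with |X ∩ U_{i_1}| = a, |X ∩ U_{i_2}| = b (case r = 2), a ≥ b, a + b ≤ s - 1. Then the bipartite graph F - X (edges avoiding X) has more than (t-s)n + ab edges, and hence contains a vertex of degree greater than t - s. -/

import Mathlib

open Finset

/-- The counting step in the proof of Lemma 2.1 (bipartite case `r = 2`): if
`F ⊆ U₁ × U₂` with `|F| > (t-1)n`, and `X` is a set of `s-1` vertices with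
`|X ∩ U₁| = a ≥ b = |X ∩ U₂|` and `a + b ≤ s - 1 ≤ t - 1`, then the subgraph of
edges avoiding `X` has more than `(t-s)n + ab` edges and contains a vertex of
degree greater than `t - s`. -/
theorem bipartite_deletion_degree
    {V : Type*} [DecidableEq V] (n t s a b : ℕ)
    (hs1 : 1 ≤ s) (hst : s ≤ t) (htn : t < n)
    (U₁ U₂ : Finset V) (hU₁ : U₁.card = n) (hU₂ : U₂.card = n)
    (hdisj : Disjoint U₁ U₂)
    (F : Finset (V × V)) (hFsub : F ⊆ U₁ ×ˢ U₂)
    (hFcard : F.card > (t - 1) * n)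
    (X : Finset V) (hX : X.card = s - 1)
    (ha : (X ∩ U₁).card = a) (hb : (X ∩ U₂).card = b)
    (hab : a ≥ b) (habs : a + b ≤ s - 1) :
    ((F.filter (fun p => p.1 ∉ X ∧ p.2 ∉ X)).card > (t - s) * n + a * b) ∧
    (∃ v : V, ((F.filter (fun p => p.1 ∉ X ∧ p.2 ∉ X)).filter
        (fun p => p.1 = v ∨ p.2 = v)).card > t - s) := by
  set F' := F.filter (fun p => p.1 ∉ X ∧ p.2 ∉ X) with hF'
  set D := F.filter (fun p => ¬(p.1 ∉ X ∧ p.2 ∉ X)) with hD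
  have hsplit : F'.card + D.card = F.card := by
    rw [hF', hD]; exact Finset.card_filter_add_card_filter_not _
  -- D is contained in the union of two product sets
  have hDsub : D ⊆ ((X ∩ U₁) ×ˢ U₂) ∪ (U₁ ×ˢ (X ∩ U₂)) := by
    intro p hp
    rw [hD, Finset.mem_filter] at hp
    obtain ⟨hpF, hpX⟩ := hp
    have hpU := hFsub hpF
    rw [Finset.mem_product] at hpU
    push_neg at hpX
    rw [Finset.mem_union, Finset.mem_product, Finset.mem_product,
      Finset.mem_inter, Finset.mem_inter]
    by_cases h1 : p.1 ∈ X
    · exact Or.inl ⟨⟨h1, hpU.1⟩, hpU.2⟩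
    · exact Or.inr ⟨hpU.1, hpX h1, hpU.2⟩
  have hinter : ((X ∩ U₁) ×ˢ U₂) ∩ (U₁ ×ˢ (X ∩ U₂)) = (X ∩ U₁) ×ˢ (X ∩ U₂) := by
    ext p
    simp only [Finset.mem_inter, Finset.mem_product]
    tauto
  have hDcard : D.card + a * b ≤ a * n + b * n := by
    have h1 := Finset.card_le_card hDsub
    have h2 := Finset.card_union_add_card_inter ((X ∩ U₁) ×ˢ U₂) (U₁ ×ˢ (X ∩ U₂))
    rw [hinter] at h2
    simp only [Finset.card_product, ha, hb, hU₁, hU₂] at h2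
    have := h2 ▸ (Nat.add_le_add_right h1 (a * b))
    calc D.card + a * b ≤ (((X ∩ U₁) ×ˢ U₂) ∪ (U₁ ×ˢ (X ∩ U₂))).card + a * b :=
          Nat.add_le_add_right h1 _
      _ = a * n + n * b := by
          have : (((X ∩ U₁) ×ˢ U₂) ∪ (U₁ ×ˢ (X ∩ U₂))).card + a * b = a * n + n * b := h2
          exact this
      _ = a * n + b * n := by ring
  have hsplitn : (t - 1) * n = (t - s) * n + (s - 1) * n := by
    have : t - 1 = (t - s) + (s - 1) := by omega
    rw [this, add_mul]
  have habn : (a + b) * n ≤ (s - 1) * n := Nat.mul_le_mul_right n habs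
  rw [add_mul] at habn
  have hmain : F'.card > (t - s) * n + a * b := by
    have h1 : F'.card + D.card > (t - s) * n + (s - 1) * n := by
      rw [hsplit, ← hsplitn]; exact hFcard
    have h2 : (s - 1) * n ≥ D.card + a * b := le_trans hDcard habn
    omega
  refine ⟨hmain, ?_⟩
  by_contra hcon
  push_neg at hcon
  have hfib : F'.card = ∑ v ∈ U₁, (F'.filter (fun p => p.1 = v)).card := by
    apply Finset.card_eq_sum_card_fiberwise
    intro p hp
    rw [hF', Finset.mem_coe, Finset.mem_filter] at hp
    exact (Finset.mem_product.mp (hFsub hp.1)).1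
  have hdeg : ∀ v, (F'.filter (fun p => p.1 = v)).card ≤ t - s := by
    intro v
    refine le_trans (Finset.card_le_card ?_) (hcon v)
    intro p hp
    rw [Finset.mem_filter] at hp ⊢
    exact ⟨hp.1, Or.inl hp.2⟩
  have hle : F'.card ≤ n * (t - s) := by
    rw [hfib]
    calc ∑ v ∈ U₁, (F'.filter (fun p => p.1 = v)).card
        ≤ ∑ _v ∈ U₁, (t - s) := Finset.sum_le_sum (fun v _ => hdeg v)
      _ = n * (t - s) := by rw [Finset.sum_const, smul_eq_mul, hU₁]
  have : (t - s) * n ≤ F'.card := le_of_lt (lt_of_le_of_lt (Nat.le_add_right _ _) hmain)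
  rw [mul_comm] at hle
  omega
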